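/- arXiv:2006.14369 — 3 statements merged into one kernel-verified Lean document; each statement's English description precedes it below -/
import Mathlib

section
/- Let M be a compact metric space, φ a continuous flow on M, and H ⊆ M a compact invariant set. Then H has the strong pseudo-orbit tracing property (SPOTP) if and only if H has the strong finite pseudo-orbit tracing property (SFPOTP). -/
/-- Partial time sums of a bi-infinite chain: `S 0 = 0`, `S i = t 0 + ⋯ + t (i-1)` for `i > 0`,
and `S i = -(t (-1) + ⋯ + t i)` for `i < 0`. -/
noncomputable def chainS (t : ℤ → ℝ) (i : ℤ) : ℝ :=
  if 0 ≤ i then ∑ j ∈ Finset.range i.toNat, t (j : ℤ)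
  else -∑ j ∈ Finset.range (-i).toNat, t (-((j : ℤ) + 1))

/-- Partial time sums of a finite chain: `S 0 = 0`, `S i = t 0 + ⋯ + t (i-1)`. -/
noncomputable def finChainS (t : ℕ → ℝ) (i : ℕ) : ℝ := ∑ j ∈ Finset.range i, t j

/-- `g` is a reparametrization: continuous, strictly increasing, `g 0 = 0`. -/
def IsRep (g : ℝ → ℝ) : Prop := Continuous g ∧ StrictMono g ∧ g 0 = 0

/-- `g` is a surjective reparametrization (the class `Rep*`). -/
def IsRepStar (g : ℝ → ℝ) : Prop := IsRep g ∧ Function.Surjective g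

/-- The class `Rep(ε)`: surjective reparametrizations whose difference quotients are
ε-close to 1. -/
def IsRepEps (ε : ℝ) (g : ℝ → ℝ) : Prop :=
  IsRepStar g ∧ ∀ s t : ℝ, s ≠ t → |(g s - g t) / (s - t) - 1| ≤ ε

variable {M : Type*} [MetricSpace M]

/-- `{x i ; t i}_{i ∈ ℤ}` is a (bi-infinite) `(δ,T)`-chain of `H` for the flow `φ`. -/
def IsChainDT (φ : ℝ → M → M) (H : Set M) (δ T : ℝ) (x : ℤ → M) (t : ℤ → ℝ) : Prop :=
  (∀ i, x i ∈ H) ∧ (∀ i, T ≤ t i) ∧ ∀ i, dist (φ (t i) (x i)) (x (i + 1)) ≤ δ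

/-- `{x i ; t i}_{i = 0}^{k}` is a finite `(δ,T)`-chain of `H` for the flow `φ`. -/
def IsFinChainDT (φ : ℝ → M → M) (H : Set M) (δ T : ℝ) (k : ℕ) (x : ℕ → M) (t : ℕ → ℝ) :
    Prop :=
  (∀ i ≤ k, x i ∈ H) ∧ (∀ i ≤ k, T ≤ t i) ∧ ∀ i < k, dist (φ (t i) (x i)) (x (i + 1)) ≤ δ

/-- The chain trajectory `x₀ * s = φ (s - S i) (x i)` (for `S i ≤ s < S (i+1)`) of a bi-infinite
chain is ε-close, for all real times `s`, to the `g`-reparametrized orbit of `z`. -/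
def TracedVia (φ : ℝ → M → M) (ε : ℝ) (x : ℤ → M) (t : ℤ → ℝ) (g : ℝ → ℝ) (z : M) : Prop :=
  ∀ i : ℤ, ∀ s : ℝ, chainS t i ≤ s → s < chainS t (i + 1) →
    dist (φ (s - chainS t i) (x i)) (φ (g s) z) ≤ ε

/-- The chain trajectory of a finite chain is ε-close, for all times `s ∈ [0, S (k+1)]`,
to the `g`-reparametrized orbit of `z`. -/
def FinTracedVia (φ : ℝ → M → M) (ε : ℝ) (k : ℕ) (x : ℕ → M) (t : ℕ → ℝ)
    (g : ℝ → ℝ) (z : M) : Prop :=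
  (∀ i ≤ k, ∀ s : ℝ, finChainS t i ≤ s → s < finChainS t (i + 1) →
    dist (φ (s - finChainS t i) (x i)) (φ (g s) z) ≤ ε) ∧
  dist (φ (t k) (x k)) (φ (g (finChainS t (k + 1))) z) ≤ ε

/-- Weak pseudo-orbit tracing property. -/
def WPOTP (φ : ℝ → M → M) (H : Set M) : Prop :=
  ∀ ε > (0 : ℝ), ∃ δ > (0 : ℝ), ∃ T > (0 : ℝ), ∀ x t, IsChainDT φ H δ T x t →
    ∃ z : M, ∃ g : ℝ → ℝ, IsRep g ∧ TracedVia φ ε x t g z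

/-- Normal pseudo-orbit tracing property. -/
def NPOTP (φ : ℝ → M → M) (H : Set M) : Prop :=
  ∀ ε > (0 : ℝ), ∃ δ > (0 : ℝ), ∃ T > (0 : ℝ), ∀ x t, IsChainDT φ H δ T x t →
    ∃ z : M, ∃ g : ℝ → ℝ, IsRepStar g ∧ TracedVia φ ε x t g z

/-- Strong pseudo-orbit tracing property. -/
def SPOTP (φ : ℝ → M → M) (H : Set M) : Prop :=
  ∀ ε > (0 : ℝ), ∃ δ > (0 : ℝ), ∃ T > (0 : ℝ), ∀ x t, IsChainDT φ H δ T x t →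
    ∃ z : M, ∃ g : ℝ → ℝ, IsRepEps ε g ∧ TracedVia φ ε x t g z

/-- Finite pseudo-orbit tracing property. -/
def FPOTP (φ : ℝ → M → M) (H : Set M) : Prop :=
  ∀ ε > (0 : ℝ), ∃ δ > (0 : ℝ), ∃ T > (0 : ℝ), ∀ k x t, IsFinChainDT φ H δ T k x t →
    ∃ z : M, ∃ g : ℝ → ℝ, IsRep g ∧ FinTracedVia φ ε k x t g z

/-- Strong finite pseudo-orbit tracing property. -/
def SFPOTP (φ : ℝ → M → M) (H : Set M) : Prop :=
  ∀ ε > (0 : ℝ), ∃ δ > (0 : ℝ), ∃ T > (0 : ℝ), ∀ k x t, IsFinChainDT φ H δ T k x t →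
    ∃ z : M, ∃ g : ℝ → ℝ, IsRepEps ε g ∧ FinTracedVia φ ε k x t g z



lemma chainS_succ' (t : ℤ → ℝ) (i : ℤ) : chainS t (i + 1) = chainS t i + t i := by
  simp only [chainS]
  rcases le_or_gt 0 i with h | h
  · rw [if_pos (by omega), if_pos h]
    have : (i+1).toNat = i.toNat + 1 := by omega
    rw [this, Finset.sum_range_succ]
    congr 2
    omega
  · rcases eq_or_lt_of_le (by omega : i ≤ -1) with h1 | h1
    · subst h1
      norm_num
    · rw [if_neg (by omega), if_neg (by omega)]
      have hm : (-i).toNat = (-(i+1)).toNat + 1 := by omega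
      rw [hm, Finset.sum_range_succ]
      have : -(((-(i+1)).toNat : ℤ) + 1) = i := by omega
      rw [this]
      ring

lemma spotp_to_sfpotp {M : Type*} [MetricSpace M]
    (φ : ℝ → M → M)
    (hflow_zero : ∀ x : M, φ 0 x = x)
    (hflow_add : ∀ s t : ℝ, ∀ x : M, φ (s + t) x = φ s (φ t x))
    (H : Set M) (hHinv : ∀ τ : ℝ, φ τ '' H = H) (h : SPOTP φ H) : SFPOTP φ H := by
  have hmemφ : ∀ (τ : ℝ) (y : M), y ∈ H → φ τ y ∈ H := by
    intro τ y hy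
    have : φ τ y ∈ φ τ '' H := Set.mem_image_of_mem _ hy
    rwa [hHinv] at this
  intro ε hε
  obtain ⟨δ, hδ, T, hT, hmain⟩ := h ε hε
  refine ⟨δ, hδ, T, hT, ?_⟩
  intro k x t ⟨hmem, htime, hjump⟩
  set t' : ℤ → ℝ := fun i => if 0 ≤ i ∧ i ≤ (k : ℤ) then t i.toNat else T with ht'
  set x' : ℤ → M := fun i => if i < 0 then φ ((i : ℝ) * T) (x 0)
    else if i ≤ (k : ℤ) then x i.toNat
    else φ (((i : ℝ) - (k + 1)) * T + t k) (x k) with hx'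
  have hchain : IsChainDT φ H δ T x' t' := by
    refine ⟨?_, ?_, ?_⟩
    · intro i
      simp only [hx']
      split
      · exact hmemφ _ _ (hmem 0 (Nat.zero_le k))
      · next h1 =>
        split
        · next h2 => exact hmem i.toNat (by omega)
        · next h2 => exact hmemφ _ _ (hmem k le_rfl)
    · intro i
      simp only [ht']
      split
      · next h1 => exact htime i.toNat (by omega)
      · exact le_rfl
    · intro i
      rcases lt_trichotomy i (-1) with hi | hi | hi
      · -- i < -1 : both expressions backward orbit
        have e1 : x' i = φ ((i : ℝ) * T) (x 0) := by simp only [hx', if_pos (by omega : i < 0)]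
        have e2 : x' (i+1) = φ (((i : ℝ) + 1) * T) (x 0) := by
          simp only [hx', if_pos (by omega : i + 1 < 0)]
          push_cast
          ring_nf
        have e3 : t' i = T := by simp only [ht']; rw [if_neg (by omega)]
        rw [e1, e2, e3, ← hflow_add]
        have : T + (i : ℝ) * T = ((i : ℝ) + 1) * T := by ring
        rw [this, dist_self]
        exact le_of_lt hδ
      · subst hi
        have e1 : x' (-1) = φ ((-1 : ℝ) * T) (x 0) := by
          simp only [hx', if_pos (by norm_num : (-1 : ℤ) < 0)]
          norm_num
        have e2 : x' (-1+1) = x 0 := by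
          simp only [hx']
          norm_num
        have e3 : t' (-1) = T := by simp only [ht']; rw [if_neg (by omega)]
        rw [e1, e2, e3, ← hflow_add]
        have : T + (-1 : ℝ) * T = 0 := by ring
        rw [this, hflow_zero, dist_self]
        exact le_of_lt hδ
      · -- i ≥ 0
        have hi0 : 0 ≤ i := by omega
        rcases lt_trichotomy i (k : ℤ) with hk | hk | hk
        · have e1 : x' i = x i.toNat := by
            simp only [hx']; rw [if_neg (by omega), if_pos (by omega)]
          have e2 : x' (i+1) = x (i.toNat + 1) := by
            simp only [hx']; rw [if_neg (by omega), if_pos (by omega)]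
            congr 1
            omega
          have e3 : t' i = t i.toNat := by simp only [ht']; rw [if_pos ⟨hi0, by omega⟩]
          rw [e1, e2, e3]
          exact hjump i.toNat (by omega)
        · subst hk
          have e1 : x' (k : ℤ) = x k := by
            simp only [hx']; rw [if_neg (by omega), if_pos le_rfl, Int.toNat_natCast]
          have e2 : x' ((k : ℤ)+1) = φ (t k) (x k) := by
            simp only [hx']; rw [if_neg (by omega), if_neg (by omega)]
            congr 1
            push_cast
            ring
          have e3 : t' (k : ℤ) = t k := by
            simp only [ht']; rw [if_pos ⟨by omega, le_rfl⟩, Int.toNat_natCast]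
          rw [e1, e2, e3, dist_self]
          exact le_of_lt hδ
        · have e1 : x' i = φ (((i : ℝ) - (k + 1)) * T + t k) (x k) := by
            simp only [hx']; rw [if_neg (by omega), if_neg (by omega)]
          have e2 : x' (i+1) = φ ((((i : ℝ) + 1) - (k + 1)) * T + t k) (x k) := by
            simp only [hx']; rw [if_neg (by omega), if_neg (by omega)]
            push_cast
            ring_nf
          have e3 : t' i = T := by simp only [ht']; rw [if_neg (by omega)]
          rw [e1, e2, e3, ← hflow_add]
          have : T + (((i : ℝ) - (k + 1)) * T + t k) = (((i : ℝ) + 1) - (k + 1)) * T + t k := by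
            ring
          rw [this, dist_self]
          exact le_of_lt hδ
  obtain ⟨z, g, hg, htr⟩ := hmain x' t' hchain
  have hSeq : ∀ i : ℕ, i ≤ k + 1 → chainS t' (i : ℤ) = finChainS t i := by
    intro i hi
    simp only [chainS, if_pos (Int.natCast_nonneg i), Int.toNat_natCast, finChainS]
    apply Finset.sum_congr rfl
    intro j hj
    simp only [Finset.mem_range] at hj
    simp only [ht']
    rw [if_pos ⟨Int.natCast_nonneg j, by omega⟩, Int.toNat_natCast]
  refine ⟨z, g, hg, ?_, ?_⟩
  · intro i hik s hs1 hs2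
    have e1 : x' (i : ℤ) = x i := by
      simp only [hx']; rw [if_neg (by omega), if_pos (by omega), Int.toNat_natCast]
    have := htr (i : ℤ) s (by rwa [hSeq i (by omega)]) (by
      have : ((i : ℤ) + 1) = ((i + 1 : ℕ) : ℤ) := by push_cast; ring
      rw [this, hSeq (i+1) (by omega)]
      exact hs2)
    rwa [hSeq i (by omega), e1] at this
  · have hk2 : chainS t' ((k : ℤ) + 1 + 1) = chainS t' ((k : ℤ) + 1) + T := by
      rw [chainS_succ']
      congr 1
      simp only [ht']
      rw [if_neg (by omega)]
    have hk1 : chainS t' ((k : ℤ) + 1) = finChainS t (k + 1) := by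
      have : ((k : ℤ) + 1) = ((k + 1 : ℕ) : ℤ) := by push_cast; ring
      rw [this, hSeq (k+1) le_rfl]
    have := htr ((k : ℤ) + 1) (finChainS t (k+1)) hk1.le
      (by rw [hk2, hk1]; linarith)
    rw [hk1, sub_self, hflow_zero] at this
    have e2 : x' ((k : ℤ)+1) = φ (t k) (x k) := by
      simp only [hx']; rw [if_neg (by omega), if_neg (by omega)]
      congr 1
      push_cast
      ring
    rwa [e2] at this

lemma clusterPt_mem {X : Type*} [TopologicalSpace X] {u : ℕ → X} {a : X}
    (h : ClusterPt a (Filter.map u Filter.atTop)) {C : Set X} (hC : IsClosed C)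
    (hu : ∀ᶠ n in Filter.atTop, u n ∈ C) : a ∈ C := by
  have h2 : ClusterPt a (Filter.principal C) :=
    h.mono (Filter.le_principal_iff.mpr (Filter.mem_map.mpr hu))
  exact hC.closure_eq ▸ mem_closure_iff_clusterPt.mpr h2

lemma quot_abs {a b s u ε : ℝ} (hsu : s ≠ u) (h : |(a - b) / (s - u) - 1| ≤ ε) :
    |(a - b) - (s - u)| ≤ ε * |s - u| := by
  have hd : s - u ≠ 0 := sub_ne_zero.mpr hsu
  have : (a - b) / (s - u) - 1 = ((a - b) - (s - u)) / (s - u) := by field_simp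
  rw [this, abs_div] at h
  rw [← div_le_iff₀ (abs_pos.mpr hd)]
  exact h

lemma sfpotp_to_spotp {M : Type*} [MetricSpace M] [CompactSpace M]
    (φ : ℝ → M → M)
    (hflow_cont : Continuous fun p : ℝ × M => φ p.1 p.2)
    (hflow_add : ∀ s t : ℝ, ∀ x : M, φ (s + t) x = φ s (φ t x))
    (H : Set M) (h : SFPOTP φ H) : SPOTP φ H := by
  intro ε hε
  set ε' := min ε (1/2) with hε'def
  have hε' : 0 < ε' := lt_min hε (by norm_num)
  have hε'le : ε' ≤ ε := min_le_left _ _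
  have hε'half : ε' ≤ 1/2 := min_le_right _ _
  obtain ⟨δ, hδ, T, hT, hmain⟩ := h ε' hε'
  refine ⟨δ, hδ, T, hT, ?_⟩
  intro x t ⟨hmem, htime, hjump⟩
  -- the truncated chains
  have hfin : ∀ n : ℕ, IsFinChainDT φ H δ T (2*n)
      (fun i => x ((i:ℤ) - n)) (fun i => t ((i:ℤ) - n)) := by
    intro n
    refine ⟨fun i _ => hmem _, fun i _ => htime _, fun i _ => ?_⟩
    have h2 : (i:ℤ) - n + 1 = ((i+1 : ℕ) : ℤ) - n := by push_cast; ring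
    have h3 := hjump ((i:ℤ) - n)
    rw [h2] at h3
    exact h3
  choose z g hg htr using fun n => hmain (2*n) _ _ (hfin n)
  -- finChainS / chainS relation
  have hFS : ∀ n i : ℕ, finChainS (fun i => t ((i:ℤ) - n)) i
      = chainS t ((i:ℤ) - n) - chainS t (-(n:ℤ)) := by
    intro n i
    induction i with
    | zero => simp [finChainS]
    | succ i ih =>
      have h1 : finChainS (fun i => t ((i:ℤ) - n)) (i+1)
          = finChainS (fun i => t ((i:ℤ) - n)) i + t ((i:ℤ) - n) :=
        Finset.sum_range_succ _ _
      have h2 : ((i+1 : ℕ) : ℤ) - n = ((i:ℤ) - n) + 1 := by push_cast; ring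
      rw [h1, ih, h2, chainS_succ']
      ring
  -- shifted tracing data
  set c : ℕ → ℝ := fun n => g n (-chainS t (-(n:ℤ))) with hc
  set zz : ℕ → M := fun n => φ (c n) (z n) with hzz
  set gg : ℕ → ℝ → ℝ := fun n s => g n (s - chainS t (-(n:ℤ))) - c n with hgg
  have hphi : ∀ n s, φ (gg n s) (zz n) = φ (g n (s - chainS t (-(n:ℤ)))) (z n) := by
    intro n s
    rw [hzz, ← hflow_add]
    congr 1
    simp [hgg]
  have hA : ∀ n, gg n 0 = 0 := by intro n; simp [hgg, hc]
  have hB : ∀ n s u, s ≠ u → |(gg n s - gg n u) / (s - u) - 1| ≤ ε' := by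
    intro n s u hsu
    have h1 := (hg n).2 (s - chainS t (-(n:ℤ))) (u - chainS t (-(n:ℤ)))
      (by intro hcon; apply hsu; linarith)
    have e1 : gg n s - gg n u = g n (s - chainS t (-(n:ℤ))) - g n (u - chainS t (-(n:ℤ))) := by
      simp only [hgg]; ring
    have e2 : (s - chainS t (-(n:ℤ))) - (u - chainS t (-(n:ℤ))) = s - u := by ring
    rw [e2] at h1
    rw [e1]
    exact h1
  have hC : ∀ (n : ℕ) (j : ℤ) (s : ℝ), j.natAbs ≤ n → chainS t j ≤ s →
      s < chainS t (j+1) → dist (φ (s - chainS t j) (x j)) (φ (gg n s) (zz n)) ≤ ε' := by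
    intro n j s hn hs1 hs2
    have hj1 : -(n:ℤ) ≤ j := by omega
    have hj2 : j ≤ (n:ℤ) := by omega
    set i : ℕ := (j + n).toNat with hi
    have hicast : (i : ℤ) = j + n := by omega
    have hik : i ≤ 2*n := by omega
    have e0 : (i : ℤ) - n = j := by omega
    have e1 : ((i+1 : ℕ) : ℤ) - n = j + 1 := by omega
    have := (htr n).1 i hik (s - chainS t (-(n:ℤ)))
      (by rw [hFS n i, e0]; linarith)
      (by rw [hFS n (i+1), e1]; linarith)
    rw [hFS n i, e0] at this
    have e2 : s - chainS t (-(n:ℤ)) - (chainS t j - chainS t (-(n:ℤ))) = s - chainS t j := by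
      ring
    rw [e2] at this
    rw [hphi n s]
    simpa [e0] using this
  -- pointwise bound for membership in the compact set
  have hKmem : ∀ n s, gg n s ∈ Set.Icc (s - ε' * |s|) (s + ε' * |s|) := by
    intro n s
    rcases eq_or_ne s 0 with rfl | hs
    · simp [hA n]
    · have := quot_abs (a := gg n s) (b := gg n 0) (by simpa using hs) (by
        simpa using hB n s 0 hs)
      rw [hA n] at this
      simp only [sub_zero] at this
      rw [abs_le] at this
      constructor <;> linarith [this.1, this.2]
  -- cluster point
  set u : ℕ → M × (ℝ → ℝ) := fun n => (zz n, gg n) with hu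
  set Kf : Set (ℝ → ℝ) := Set.pi Set.univ (fun s => Set.Icc (s - ε' * |s|) (s + ε' * |s|))
    with hKf
  have hKc : IsCompact ((Set.univ : Set M) ×ˢ Kf) :=
    isCompact_univ.prod (isCompact_univ_pi (fun s => isCompact_Icc))
  have hle : Filter.map u Filter.atTop ≤ Filter.principal ((Set.univ : Set M) ×ˢ Kf) := by
    rw [Filter.le_principal_iff, Filter.mem_map]
    filter_upwards with n
    exact ⟨Set.mem_univ _, fun s _ => hKmem n s⟩
  obtain ⟨p, -, hcp⟩ := hKc.exists_clusterPt hle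
  set G : ℝ → ℝ := p.2 with hG
  set Z : M := p.1 with hZ
  -- limit properties via closed conditions
  have hGzero : G 0 = 0 := by
    have : p ∈ {q : M × (ℝ → ℝ) | q.2 0 = 0} := by
      refine clusterPt_mem hcp ?_ ?_
      · exact isClosed_eq ((continuous_apply (0:ℝ)).comp continuous_snd) continuous_const
      · filter_upwards with n; exact hA n
    exact this
  have hGquot : ∀ s v : ℝ, s ≠ v → |(G s - G v) / (s - v) - 1| ≤ ε' := by
    intro s v hsv
    have : p ∈ {q : M × (ℝ → ℝ) | |(q.2 s - q.2 v) / (s - v) - 1| ≤ ε'} := by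
      refine clusterPt_mem hcp ?_ ?_
      · apply isClosed_le _ continuous_const
        apply Continuous.abs
        apply Continuous.sub _ continuous_const
        exact (((continuous_apply s).comp continuous_snd).sub
          ((continuous_apply v).comp continuous_snd)).div_const _
      · filter_upwards with n; exact hB n s v hsv
    exact this
  have hGtrace : ∀ (j : ℤ) (s : ℝ), chainS t j ≤ s → s < chainS t (j+1) →
      dist (φ (s - chainS t j) (x j)) (φ (G s) Z) ≤ ε' := by
    intro j s hs1 hs2
    have : p ∈ {q : M × (ℝ → ℝ) |
        dist (φ (s - chainS t j) (x j)) (φ (q.2 s) q.1) ≤ ε'} := by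
      refine clusterPt_mem hcp ?_ ?_
      · apply isClosed_le _ continuous_const
        apply Continuous.dist continuous_const
        have h1 : Continuous (fun q : M × (ℝ → ℝ) => (q.2 s, q.1)) :=
          ((continuous_apply s).comp continuous_snd).prodMk continuous_fst
        exact hflow_cont.comp h1
      · filter_upwards [Filter.eventually_ge_atTop j.natAbs] with n hn
        exact hC n j s hn hs1 hs2
    exact this
  -- lower/upper increment bounds
  have hlow : ∀ a b : ℝ, a < b → (1 - ε') * (b - a) ≤ G b - G a := by
    intro a b hab
    have := quot_abs (a := G b) (b := G a) (ne_of_gt hab) (hGquot b a (ne_of_gt hab))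
    rw [abs_le, abs_of_pos (by linarith : (0:ℝ) < b - a)] at this
    nlinarith [this.1]
  have hup : ∀ a b : ℝ, |G b - G a| ≤ 2 * |b - a| := by
    intro a b
    rcases eq_or_ne b a with rfl | hba
    · simp
    · have := quot_abs (a := G b) (b := G a) hba (hGquot b a hba)
      have habs := abs_sub_abs_le_abs_sub (G b - G a) (b - a)
      have : |G b - G a| ≤ |b - a| + ε' * |b - a| := by
        have h2 := abs_sub (G b - G a) (b - a)
        calc |G b - G a| = |(G b - G a - (b - a)) + (b - a)| := by ring_nf
          _ ≤ |G b - G a - (b - a)| + |b - a| := abs_add_le _ _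
          _ ≤ ε' * |b - a| + |b - a| := by linarith
          _ = |b - a| + ε' * |b - a| := by ring
      nlinarith [abs_nonneg (b - a)]
  have hGcont : Continuous G := by
    refine LipschitzWith.continuous (K := 2) (LipschitzWith.of_dist_le_mul fun a b => ?_)
    rw [Real.dist_eq, Real.dist_eq]
    simpa using hup b a
  have hGmono : StrictMono G := by
    intro a b hab
    have := hlow a b hab
    nlinarith
  have hGsurj : Function.Surjective G := by
    intro y
    set a : ℝ := 2 * |y| + 2 with ha
    have ha0 : 0 < a := by positivity
    have h1 : y ≤ G a := by
      have hl := hlow 0 a ha0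
      rw [hGzero] at hl
      have hGa : a / 2 ≤ G a := by nlinarith
      calc y ≤ |y| := le_abs_self y
        _ ≤ a / 2 := by rw [ha]; linarith
        _ ≤ G a := hGa
    have h2 : G (-a) ≤ y := by
      have := hlow (-a) 0 (by linarith)
      rw [hGzero] at this
      have hGa : G (-a) ≤ -(a/2) := by nlinarith
      calc G (-a) ≤ -(a/2) := hGa
        _ ≤ -|y| := by rw [ha]; linarith
        _ ≤ y := neg_abs_le y
    have := intermediate_value_Icc (by linarith : -a ≤ a) hGcont.continuousOn
    obtain ⟨x0, _, hx0⟩ := this ⟨h2, h1⟩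
    exact ⟨x0, hx0⟩
  refine ⟨Z, G, ⟨⟨⟨hGcont, hGmono, hGzero⟩, hGsurj⟩,
    fun s v hsv => le_trans (hGquot s v hsv) hε'le⟩, fun j s hs1 hs2 =>
    le_trans (hGtrace j s hs1 hs2) hε'le⟩

theorem spotp_iff_sfpotp {M : Type*} [MetricSpace M] [CompactSpace M]
    (φ : ℝ → M → M)
    (hflow_cont : Continuous fun p : ℝ × M => φ p.1 p.2)
    (hflow_zero : ∀ x : M, φ 0 x = x)
    (hflow_add : ∀ s t : ℝ, ∀ x : M, φ (s + t) x = φ s (φ t x))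
    (H : Set M) (hHcomp : IsCompact H) (hHinv : ∀ τ : ℝ, φ τ '' H = H) :
    SPOTP φ H ↔ SFPOTP φ H :=
  ⟨spotp_to_sfpotp φ hflow_zero hflow_add H hHinv,
   sfpotp_to_spotp φ hflow_cont hflow_add H⟩
end

section
/- Let M be a compact metric space, φ a continuous flow on M, and H ⊆ M a compact invariant set. Then H has the finite pseudo-orbit tracing property (FPOTP) if and only if for every ε > 0 and every T > 0 there exists δ > 0 such that every finite (δ,T)-chain of H is weakly ε-traced by some point of M. -/
variable {M : Type*} [MetricSpace M]

section FpotpAux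

private lemma finChainS_zero' (t : ℕ → ℝ) : finChainS t 0 = 0 := by simp [finChainS]

private lemma finChainS_succ' (t : ℕ → ℝ) (i : ℕ) :
    finChainS t (i + 1) = finChainS t i + t i := by
  simp [finChainS, Finset.sum_range_succ]

private lemma sum_gap {T : ℝ} {t : ℕ → ℝ} {k i j : ℕ} (ht : ∀ i ≤ k, T ≤ t i)
    (hij : i ≤ j) (hj : j ≤ k + 1) :
    ((j - i : ℕ) : ℝ) * T ≤ finChainS t j - finChainS t i := by
  rw [finChainS, finChainS, ← Finset.sum_Ico_eq_sub _ hij]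
  have h := Finset.card_nsmul_le_sum (Finset.Ico i j) t T
    (fun l hl => ht l (by have := (Finset.mem_Ico.mp hl).2; omega))
  simpa [Nat.card_Ico, nsmul_eq_mul] using h

private lemma finChainS_mono {T : ℝ} {t : ℕ → ℝ} {k i j : ℕ} (hT : 0 ≤ T)
    (ht : ∀ i ≤ k, T ≤ t i) (hij : i ≤ j) (hj : j ≤ k + 1) :
    finChainS t i ≤ finChainS t j := by
  have h := sum_gap ht hij hj
  nlinarith [Nat.cast_nonneg (α := ℝ) (j - i)]

private lemma finChainS_nonneg {T : ℝ} {t : ℕ → ℝ} {k i : ℕ} (hT : 0 ≤ T)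
    (ht : ∀ i ≤ k, T ≤ t i) (hi : i ≤ k + 1) : 0 ≤ finChainS t i := by
  have := finChainS_mono hT ht (Nat.zero_le i) hi
  rwa [finChainS_zero'] at this

/-- The index of the piece of the chain trajectory containing time `s`:
the greatest `i ≤ k` with `finChainS t i ≤ s`. -/
noncomputable def chIdx (t : ℕ → ℝ) (k : ℕ) (s : ℝ) : ℕ :=
  Nat.findGreatest (fun i => finChainS t i ≤ s) k

/-- The chain trajectory (extended beyond the last jump by the flow of `x k`). -/
noncomputable def chTr {M : Type*} [MetricSpace M] (φ : ℝ → M → M)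
    (x : ℕ → M) (t : ℕ → ℝ) (k : ℕ) (s : ℝ) : M :=
  φ (s - finChainS t (chIdx t k s)) (x (chIdx t k s))

private lemma chIdx_le (t : ℕ → ℝ) (k : ℕ) (s : ℝ) : chIdx t k s ≤ k := by
  unfold chIdx; exact Nat.findGreatest_le k

private lemma chIdx_S_le {t : ℕ → ℝ} {k : ℕ} {s : ℝ} (hs : 0 ≤ s) :
    finChainS t (chIdx t k s) ≤ s := by
  unfold chIdx
  exact Nat.findGreatest_spec (P := fun i => finChainS t i ≤ s) (Nat.zero_le k)
    (by show finChainS t 0 ≤ s; rw [finChainS_zero']; exact hs)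

private lemma le_chIdx {t : ℕ → ℝ} {k i : ℕ} {s : ℝ} (hik : i ≤ k)
    (h : finChainS t i ≤ s) : i ≤ chIdx t k s := by
  unfold chIdx; exact Nat.le_findGreatest hik h

private lemma chIdx_lt_S {t : ℕ → ℝ} {k i : ℕ} {s : ℝ} (h : chIdx t k s < i)
    (hik : i ≤ k) : s < finChainS t i := by
  unfold chIdx at h
  have := Nat.findGreatest_is_greatest h hik
  exact lt_of_not_ge this

private lemma chIdx_eq {T : ℝ} {t : ℕ → ℝ} {k i : ℕ} {s : ℝ} (hT : 0 < T)
    (ht : ∀ i ≤ k, T ≤ t i) (hik : i ≤ k) (h1 : finChainS t i ≤ s)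
    (h2 : s < finChainS t (i + 1)) : chIdx t k s = i := by
  have hs0 : 0 ≤ s := le_trans (finChainS_nonneg hT.le ht (by omega)) h1
  refine le_antisymm ?_ (le_chIdx hik h1)
  by_contra hlt
  push_neg at hlt
  have hkle := chIdx_le t k s
  have hmono : finChainS t (i + 1) ≤ finChainS t (chIdx t k s) :=
    finChainS_mono hT.le ht hlt (by omega)
  have := chIdx_S_le (t := t) (k := k) hs0
  linarith

private lemma chIdx_mono {t : ℕ → ℝ} {k : ℕ} {a b : ℝ} (ha : 0 ≤ a) (hab : a ≤ b) :
    chIdx t k a ≤ chIdx t k b :=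
  le_chIdx (chIdx_le _ _ _) (le_trans (chIdx_S_le ha) hab)

private lemma prop_bound {M : Type*} [MetricSpace M] {φ : ℝ → M → M}
    (hflow_zero : ∀ x : M, φ 0 x = x)
    (hflow_add : ∀ s t : ℝ, ∀ x : M, φ (s + t) x = φ s (φ t x))
    {T T₀ δ ρ : ℝ} (hT : 0 < T)
    (huc : ∀ τ, 0 ≤ τ → τ ≤ T₀ → ∀ u v : M, dist u v ≤ δ → dist (φ τ u) (φ τ v) ≤ ρ)
    {k : ℕ} {x : ℕ → M} {t : ℕ → ℝ}
    (ht : ∀ i ≤ k, T ≤ t i) (hc : ∀ i < k, dist (φ (t i) (x i)) (x (i + 1)) ≤ δ) :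
    ∀ r : ℕ, ∀ a b : ℝ, 0 ≤ a → a ≤ b → b - a ≤ T₀ →
      chIdx t k b - chIdx t k a = r →
      dist (φ (b - a) (chTr φ x t k a)) (chTr φ x t k b) ≤ r * ρ := by
  intro r
  induction r with
  | zero =>
    intro a b ha hab hba hr
    have h1 : chIdx t k a ≤ chIdx t k b := chIdx_mono ha hab
    have h2 : chIdx t k b = chIdx t k a := by omega
    have heq : φ (b - a) (chTr φ x t k a) = chTr φ x t k b := by
      rw [chTr, chTr, h2, ← hflow_add]
      congr 1
      ring
    rw [heq]
    simp
  | succ r ih =>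
    intro a b ha hab hba hr
    have hb0 : 0 ≤ b := le_trans ha hab
    have hmono : chIdx t k a ≤ chIdx t k b := chIdx_mono ha hab
    set i := chIdx t k a with hi
    have hib : i < chIdx t k b := by omega
    have hik : i + 1 ≤ k := le_trans hib (chIdx_le t k b)
    have hac : a < finChainS t (i + 1) := chIdx_lt_S (by omega) hik
    have hcb : finChainS t (i + 1) ≤ b :=
      le_trans (finChainS_mono hT.le ht hib (by have := chIdx_le t k b; omega))
        (chIdx_S_le hb0)
    have hidxc : chIdx t k (finChainS t (i + 1)) = i + 1 := by
      refine chIdx_eq hT ht hik le_rfl ?_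
      have := sum_gap ht (show i + 1 ≤ i + 2 by omega) (show i + 2 ≤ k + 1 by omega)
      have hcast : ((i + 2 - (i + 1) : ℕ) : ℝ) = 1 := by norm_num
      rw [hcast] at this
      linarith
    set c := finChainS t (i + 1) with hc'
    have step1 : dist (φ (t i) (x i)) (x (i + 1)) ≤ δ := hc i (by omega)
    have e1 : φ (c - a) (chTr φ x t k a) = φ (t i) (x i) := by
      rw [chTr, ← hi, ← hflow_add]
      congr 1
      rw [hc', finChainS_succ']
      ring
    have e2 : chTr φ x t k c = x (i + 1) := by
      rw [chTr, hidxc, sub_self, hflow_zero]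
    have e3 : φ (b - a) (chTr φ x t k a) = φ (b - c) (φ (c - a) (chTr φ x t k a)) := by
      rw [← hflow_add]
      congr 1
      ring
    have h4 : dist (φ (b - c) (φ (c - a) (chTr φ x t k a))) (φ (b - c) (chTr φ x t k c)) ≤ ρ := by
      rw [e1, e2]
      exact huc _ (by linarith) (by linarith) _ _ step1
    have h5 : dist (φ (b - c) (chTr φ x t k c)) (chTr φ x t k b) ≤ r * ρ := by
      refine ih c b (le_trans ha hac.le) hcb (by linarith) ?_
      rw [hidxc]
      omega
    calc dist (φ (b - a) (chTr φ x t k a)) (chTr φ x t k b)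
        ≤ dist (φ (b - a) (chTr φ x t k a)) (φ (b - c) (chTr φ x t k c))
          + dist (φ (b - c) (chTr φ x t k c)) (chTr φ x t k b) := dist_triangle _ _ _
      _ ≤ ρ + r * ρ := by rw [e3]; exact add_le_add h4 h5
      _ = (r + 1 : ℕ) * ρ := by push_cast; ring

private lemma idx_diff_bound {T T₀ : ℝ} {t : ℕ → ℝ} {k : ℕ} (hT : 0 < T) (hT₀ : 0 < T₀)
    (ht : ∀ i ≤ k, T ≤ t i) {a b : ℝ} (ha : 0 ≤ a) (hab : a ≤ b) (hba : b - a ≤ T₀) :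
    ((chIdx t k b - chIdx t k a : ℕ) : ℝ) ≤ T₀ / T + 1 := by
  by_cases h : chIdx t k b ≤ chIdx t k a
  · rw [Nat.sub_eq_zero_of_le h]
    have : 0 ≤ T₀ / T := by positivity
    push_cast
    linarith
  · push_neg at h
    have hkle : chIdx t k b ≤ k := chIdx_le t k b
    have h1 : a < finChainS t (chIdx t k a + 1) :=
      chIdx_lt_S (t := t) (k := k) (s := a) (by omega) (by omega)
    have h2 : finChainS t (chIdx t k b) ≤ b := chIdx_S_le (le_trans ha hab)
    have h3 : ((chIdx t k b - (chIdx t k a + 1) : ℕ) : ℝ) * T ≤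
        finChainS t (chIdx t k b) - finChainS t (chIdx t k a + 1) :=
      sum_gap ht h (by omega)
    have h5 : finChainS t (chIdx t k a + 1) ≤ finChainS t (chIdx t k b) :=
      finChainS_mono hT.le ht h (by omega)
    have h4 : ((chIdx t k b - (chIdx t k a + 1) : ℕ) : ℝ) ≤ T₀ / T := by
      rw [le_div_iff₀ hT]
      linarith
    have hcast : ((chIdx t k b - chIdx t k a : ℕ) : ℝ) =
        ((chIdx t k b - (chIdx t k a + 1) : ℕ) : ℝ) + 1 := by
      have : chIdx t k b - chIdx t k a = (chIdx t k b - (chIdx t k a + 1)) + 1 := by omega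
      rw [this]
      push_cast
      ring
    linarith

end FpotpAux
theorem fpotp_iff_uniform_in_T {M : Type*} [MetricSpace M] [CompactSpace M]
    (φ : ℝ → M → M)
    (hflow_cont : Continuous fun p : ℝ × M => φ p.1 p.2)
    (hflow_zero : ∀ x : M, φ 0 x = x)
    (hflow_add : ∀ s t : ℝ, ∀ x : M, φ (s + t) x = φ s (φ t x))
    (H : Set M) (hHcomp : IsCompact H) (hHinv : ∀ τ : ℝ, φ τ '' H = H) :
    FPOTP φ H ↔
      ∀ ε > (0 : ℝ), ∀ T > (0 : ℝ), ∃ δ > (0 : ℝ), ∀ k x t, IsFinChainDT φ H δ T k x t →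
        ∃ z : M, ∃ g : ℝ → ℝ, IsRep g ∧ FinTracedVia φ ε k x t g z := by
  constructor
  · intro hF ε hε T hT
    obtain ⟨δ₀, hδ₀, T₀, hT₀, htr⟩ := hF (ε / 2) (by linarith)
    -- uniform continuity of the flow on [0, T₀] × M
    have hΦuc : ∀ ρ > (0 : ℝ), ∃ δ > (0 : ℝ), ∀ τ, 0 ≤ τ → τ ≤ T₀ →
        ∀ u v : M, dist u v ≤ δ → dist (φ τ u) (φ τ v) ≤ ρ := by
      intro ρ hρ
      have hK : IsCompact ((Set.Icc (0 : ℝ) T₀) ×ˢ (Set.univ : Set M)) :=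
        isCompact_Icc.prod isCompact_univ
      have hucOn : UniformContinuousOn (fun p : ℝ × M => φ p.1 p.2)
          ((Set.Icc (0 : ℝ) T₀) ×ˢ (Set.univ : Set M)) :=
        hK.uniformContinuousOn_of_continuous hflow_cont.continuousOn
      obtain ⟨δ₁, hδ₁, hd⟩ := (Metric.uniformContinuousOn_iff.mp hucOn) ρ hρ
      refine ⟨δ₁ / 2, by linarith, ?_⟩
      intro τ hτ0 hτT u v huv
      have h := hd (τ, u) (by simp [Set.mem_prod, hτ0, hτT]) (τ, v)
        (by simp [Set.mem_prod, hτ0, hτT]) (by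
          simp only [Prod.dist_eq, dist_self]
          rw [max_eq_right dist_nonneg]
          linarith)
      exact h.le
    set B : ℝ := T₀ / T + 1 with hB
    have hBpos : 0 < B := by positivity
    set ρ : ℝ := min δ₀ (ε / 2) / B with hρdef
    have hminpos : 0 < min δ₀ (ε / 2) := lt_min hδ₀ (by linarith)
    have hρ : 0 < ρ := by positivity
    obtain ⟨δ, hδ, huc⟩ := hΦuc ρ hρ
    refine ⟨δ, hδ, ?_⟩
    intro k x t hchain
    obtain ⟨hxH, ht, hjump⟩ := hchain
    -- the key propagation estimate
    have key : ∀ a b : ℝ, 0 ≤ a → a ≤ b → b - a ≤ T₀ →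
        dist (φ (b - a) (chTr φ x t k a)) (chTr φ x t k b) ≤ min δ₀ (ε / 2) := by
      intro a b ha hab hba
      have h1 := prop_bound hflow_zero hflow_add hT huc ht hjump
        (chIdx t k b - chIdx t k a) a b ha hab hba rfl
      have h2 := idx_diff_bound hT hT₀ ht ha hab hba (t := t) (k := k)
      have h3 : ((chIdx t k b - chIdx t k a : ℕ) : ℝ) * ρ ≤ B * ρ :=
        mul_le_mul_of_nonneg_right h2 hρ.le
      have hBρ : B * ρ = min δ₀ (ε / 2) := by
        rw [hρdef]
        field_simp
      exact h1.trans (h3.trans hBρ.le)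
    -- trajectory points lie in H
    have hTrH : ∀ σ : ℝ, chTr φ x t k σ ∈ H := by
      intro σ
      rw [chTr]
      have hx' : x (chIdx t k σ) ∈ H := hxH _ (chIdx_le t k σ)
      rw [← hHinv (σ - finChainS t (chIdx t k σ))]
      exact Set.mem_image_of_mem _ hx'
    have hS0 : 0 ≤ finChainS t (k + 1) := finChainS_nonneg hT.le ht le_rfl
    set m : ℕ := ⌈finChainS t (k + 1) / T₀⌉₊ with hm
    have hcover : finChainS t (k + 1) < ((m : ℝ) + 1) * T₀ := by
      have h1 : finChainS t (k + 1) / T₀ ≤ (m : ℝ) := Nat.le_ceil _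
      rw [div_le_iff₀ hT₀] at h1
      nlinarith
    have hfinSconst : ∀ j : ℕ, finChainS (fun _ : ℕ => T₀) j = (j : ℝ) * T₀ := by
      intro j
      simp [finChainS, mul_comm]
    -- the coarse chain is a (δ₀, T₀)-chain
    have hnew : IsFinChainDT φ H δ₀ T₀ m (fun j => chTr φ x t k ((j : ℝ) * T₀))
        (fun _ => T₀) := by
      refine ⟨fun j _ => hTrH _, fun j _ => le_rfl, ?_⟩
      intro j hj
      have hsub : ((j + 1 : ℕ) : ℝ) * T₀ - (j : ℝ) * T₀ = T₀ := by push_cast; ring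
      have h := key ((j : ℝ) * T₀) (((j + 1 : ℕ) : ℝ) * T₀) (by positivity)
        (by push_cast; nlinarith) (by rw [hsub])
      rw [hsub] at h
      exact le_trans h (min_le_left _ _)
    obtain ⟨z, g, hg, htrace⟩ := htr m _ _ hnew
    -- master estimate: the whole trajectory is ε-traced
    have master : ∀ σ : ℝ, 0 ≤ σ → σ ≤ finChainS t (k + 1) →
        dist (chTr φ x t k σ) (φ (g σ) z) ≤ ε := by
      intro σ hσ0 hσ1
      set j : ℕ := ⌊σ / T₀⌋₊ with hj
      have hjle : (j : ℝ) * T₀ ≤ σ := by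
        have h := Nat.floor_le (show (0 : ℝ) ≤ σ / T₀ by positivity)
        calc (j : ℝ) * T₀ ≤ (σ / T₀) * T₀ := by nlinarith
          _ = σ := by field_simp
      have hjlt : σ < ((j : ℝ) + 1) * T₀ := by
        have h := Nat.lt_floor_add_one (σ / T₀)
        calc σ = (σ / T₀) * T₀ := by field_simp
          _ < ((j : ℝ) + 1) * T₀ := by nlinarith
      have hjm : j ≤ m := by
        have h1 : (j : ℝ) * T₀ < ((m : ℝ) + 1) * T₀ :=
          lt_of_le_of_lt hjle (lt_of_le_of_lt hσ1 hcover)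
        have h2 : (j : ℝ) < (m : ℝ) + 1 := by nlinarith
        have h3 : j < m + 1 := by exact_mod_cast h2
        omega
      have h1 := htrace.1 j hjm σ (by rw [hfinSconst]; exact hjle)
        (by rw [hfinSconst]; push_cast; exact hjlt)
      simp only [hfinSconst] at h1
      have h2 := key ((j : ℝ) * T₀) σ (by positivity) hjle (by linarith)
      have h2' : dist (φ (σ - (j : ℝ) * T₀) (chTr φ x t k ((j : ℝ) * T₀)))
          (chTr φ x t k σ) ≤ ε / 2 := le_trans h2 (min_le_right _ _)
      calc dist (chTr φ x t k σ) (φ (g σ) z)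
          ≤ dist (chTr φ x t k σ) (φ (σ - (j : ℝ) * T₀) (chTr φ x t k ((j : ℝ) * T₀)))
            + dist (φ (σ - (j : ℝ) * T₀) (chTr φ x t k ((j : ℝ) * T₀))) (φ (g σ) z) :=
            dist_triangle _ _ _
        _ ≤ ε / 2 + ε / 2 := add_le_add (by rw [dist_comm]; exact h2') h1
        _ = ε := by ring
    refine ⟨z, g, hg, ?_, ?_⟩
    · intro i hik σ h1 h2
      have hσ0 : 0 ≤ σ := le_trans (finChainS_nonneg hT.le ht (by omega)) h1
      have hidx : chIdx t k σ = i := chIdx_eq hT ht hik h1 h2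
      have hσ1 : σ ≤ finChainS t (k + 1) :=
        le_trans h2.le (finChainS_mono hT.le ht (by omega) le_rfl)
      have h := master σ hσ0 hσ1
      rwa [chTr, hidx] at h
    · have hidx : chIdx t k (finChainS t (k + 1)) = k := by
        refine le_antisymm (chIdx_le t k _) (le_chIdx le_rfl ?_)
        exact finChainS_mono hT.le ht (by omega) le_rfl
      have h := master (finChainS t (k + 1)) hS0 le_rfl
      rw [chTr, hidx] at h
      have harg : finChainS t (k + 1) - finChainS t k = t k := by
        rw [finChainS_succ']; ring
      rwa [harg] at h
  · intro h ε hε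
    obtain ⟨δ, hδ, hh⟩ := h ε hε 1 one_pos
    exact ⟨δ, hδ, 1, one_pos, hh⟩
end

section
/- Let M be a compact metric space, φ a continuous flow on M, and H ⊆ M a compact invariant set. Then H has the finite pseudo-orbit tracing property (FPOTP) if and only if H has the 'normal finite' pseudo-orbit tracing property, i.e., for every ε > 0 there exist δ, T > 0 such that every finite (δ,T)-chain of H is ε-traced by some point of M via a surjective reparametrization g ∈ Rep* (in other words, for finite chains, requiring the reparametrization to lie in Rep* instead of Rep yields the same tracing property). -/
variable {M : Type*} [MetricSpace M]

lemma extend_rep' (g : ℝ → ℝ) (hg : IsRep g) (L : ℝ) (hL : 0 ≤ L) :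
    ∃ g' : ℝ → ℝ, IsRepStar g' ∧ ∀ s, 0 ≤ s → s ≤ L → g' s = g s := by
  obtain ⟨hcont, hsm, hg0⟩ := hg
  set c : ℝ → ℝ := fun s => min (max s 0) L with hc
  set d : ℝ → ℝ := fun s => min s 0 + max (s - L) 0 with hd
  set h : ℝ → ℝ := fun s => g (c s) + d s with hh
  have hcmono : Monotone c := ((monotone_id.max monotone_const).min monotone_const)
  have hdmono : Monotone d := by
    intro a b hab
    simp only [hd]
    gcongr
  have hcd : ∀ s, c s + d s = s := by
    intro s
    simp only [hc, hd]
    rcases le_total s 0 with h0 | h0 <;> rcases le_total s L with h1 | h1 <;>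
      simp [min_def, max_def, h0, h1] <;> (try split_ifs) <;> intros <;> linarith
  have hagree : ∀ s, 0 ≤ s → s ≤ L → h s = g s := by
    intro s h0 h1
    simp only [hh, hc, hd, max_eq_left h0, min_eq_left h1, min_eq_right h0,
      max_eq_right (by linarith : s - L ≤ 0)]
    ring
  have hsm' : StrictMono h := by
    intro a b hab
    rcases (hcmono hab.le).lt_or_eq with h1 | h1
    · have := hdmono hab.le
      simp only [hh]
      have := hsm h1
      linarith
    · have : d a < d b := by
        have ha := hcd a; have hb := hcd b; linarith
      simp only [hh, h1]
      linarith
  have hhcont : Continuous h := by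
    apply Continuous.add
    · exact hcont.comp ((continuous_id.max continuous_const).min continuous_const)
    · exact (continuous_id.min continuous_const).add
        ((continuous_id.sub continuous_const).max continuous_const)
  have hh0 : h 0 = 0 := by
    rw [hagree 0 le_rfl hL, hg0]
  have hsurj : Function.Surjective h := by
    intro y
    rcases le_total y 0 with hy | hy
    · refine ⟨y, ?_⟩
      simp only [hh, hc, hd, max_eq_right hy, min_eq_left hL, min_eq_left hy,
        max_eq_right (by linarith : y - L ≤ 0)]
      simp [hg0]
    · have hb : h (L + y) = g L + y := by
        simp only [hh, hc, hd]
        rw [max_eq_left (by linarith), min_eq_right (by linarith),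
          min_eq_right (by linarith), max_eq_left (by linarith)]
        ring
      have hgL : 0 ≤ g L := by
        rw [← hg0]; exact hsm.monotone hL
      have hmem : y ∈ Set.Icc (h 0) (h (L + y)) := by
        rw [hh0, hb]; constructor <;> linarith
      obtain ⟨z, _, hz⟩ := intermediate_value_Icc (by linarith : (0:ℝ) ≤ L + y)
        hhcont.continuousOn hmem
      exact ⟨z, hz⟩
  exact ⟨h, ⟨⟨hhcont, hsm', hh0⟩, hsurj⟩, hagree⟩

theorem fpotp_iff_normal_finite_potp {M : Type*} [MetricSpace M] [CompactSpace M]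
    (φ : ℝ → M → M)
    (hflow_cont : Continuous fun p : ℝ × M => φ p.1 p.2)
    (hflow_zero : ∀ x : M, φ 0 x = x)
    (hflow_add : ∀ s t : ℝ, ∀ x : M, φ (s + t) x = φ s (φ t x))
    (H : Set M) (hHcomp : IsCompact H) (hHinv : ∀ τ : ℝ, φ τ '' H = H) :
    FPOTP φ H ↔
      ∀ ε > (0 : ℝ), ∃ δ > (0 : ℝ), ∃ T > (0 : ℝ), ∀ k x t, IsFinChainDT φ H δ T k x t →
        ∃ z : M, ∃ g : ℝ → ℝ, IsRepStar g ∧ FinTracedVia φ ε k x t g z := by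
  constructor
  · intro hf ε hε
    obtain ⟨δ, hδ, T, hT, hmain⟩ := hf ε hε
    refine ⟨δ, hδ, T, hT, fun k x t hchain => ?_⟩
    obtain ⟨z, g, hg, htr⟩ := hmain k x t hchain
    obtain ⟨_, ht2, _⟩ := hchain
    have hmono : ∀ i j : ℕ, i ≤ j → j ≤ k + 1 → finChainS t i ≤ finChainS t j := by
      intro i j hij hjk
      unfold finChainS
      apply Finset.sum_le_sum_of_subset_of_nonneg (Finset.range_subset_range.2 hij)
      intro m hm _
      rw [Finset.mem_range] at hm
      exact le_trans hT.le (ht2 m (by omega))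
    have hL0 : (0 : ℝ) ≤ finChainS t (k + 1) := by
      have := hmono 0 (k + 1) (Nat.zero_le _) le_rfl
      simpa [finChainS] using this
    obtain ⟨g', hg', hagree⟩ := extend_rep' g hg (finChainS t (k + 1)) hL0
    refine ⟨z, g', hg', ?_, ?_⟩
    · intro i hi s hs1 hs2
      have h0i : (0 : ℝ) ≤ finChainS t i := by
        have h := hmono 0 i (Nat.zero_le _) (by omega)
        simpa [finChainS] using h
      have h0s : 0 ≤ s := le_trans h0i hs1
      have hsL : s ≤ finChainS t (k + 1) :=
        le_trans hs2.le (hmono (i + 1) (k + 1) (by omega) le_rfl)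
      rw [hagree s h0s hsL]
      exact htr.1 i hi s hs1 hs2
    · rw [hagree _ hL0 le_rfl]
      exact htr.2
  · intro hn ε hε
    obtain ⟨δ, hδ, T, hT, hmain⟩ := hn ε hε
    refine ⟨δ, hδ, T, hT, fun k x t hchain => ?_⟩
    obtain ⟨z, g, hg, htr⟩ := hmain k x t hchain
    exact ⟨z, g, hg.1, htr⟩
end
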